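/- Let q ≡ 1 (mod 6) be a prime power and χ a primitive cubic character of genus g over 𝔽_q[T] which is odd. Then for every integer A with 0 ≤ A ≤ g and every s ∈ ℂ, 𝓛(q^{−s}, χ) = ∑_{f∈𝓜_{≤A}} χ(f)/|f|^s + ω(χ) · q^{(1/2 − s)g} · ∑_{f∈𝓜_{≤ g−A−1}} χ̄(f)/|f|^{1−s}. -/

import Mathlib

open Polynomial Finset Filter
open scoped Classical

noncomputable section

/-- The monic polynomial `X^n + ∑_{i<n} c i · X^i`; as `c` ranges over `Fin n → Fq`
this parametrizes the monic polynomials of degree `n` over `Fq`. -/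
def monicOf {Fq : Type} [Field Fq] (n : ℕ) (c : Fin n → Fq) : Polynomial Fq :=
  X ^ n + ∑ i : Fin n, C (c i) * X ^ (i : ℕ)

/-- Sum of `φ` over the monic polynomials of degree `n` in `Fq[T]`. -/
def sumMonic {Fq : Type} [Field Fq] [Fintype Fq] (n : ℕ) (φ : Polynomial Fq → ℂ) : ℂ :=
  ∑ c : Fin n → Fq, φ (monicOf n c)

/-- Sum of `φ` over the squarefree monic polynomials of degree `n` in `Fq[T]`. -/
def sumSqfree {Fq : Type} [Field Fq] [Fintype Fq] (n : ℕ) (φ : Polynomial Fq → ℂ) : ℂ :=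
  ∑ c : Fin n → Fq, if Squarefree (monicOf n c) then φ (monicOf n c) else 0

/-- `L(s,χ) = ∑_{F monic} χ(F)|F|^{-s}`, grouped by degree.  For the characters in this
paper the coefficient sums vanish in large degree, so this is a finite sum giving the
analytic continuation of the Dirichlet series. -/
def Lval {Fq : Type} [Field Fq] [Fintype Fq] (q : ℕ) (s : ℝ) (χ : Polynomial Fq → ℂ) : ℂ :=
  ∑' n : ℕ, sumMonic n χ * ((q : ℝ) ^ (-s * (n : ℝ)) : ℝ)

/-- `𝓛(u,χ) = ∑_{F monic} χ(F) u^{deg F}`, grouped by degree. -/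
def Lu {Fq : Type} [Field Fq] [Fintype Fq] (u : ℂ) (χ : Polynomial Fq → ℂ) : ℂ :=
  ∑' n : ℕ, sumMonic n χ * u ^ n

/-- `chi` is the family of cubic residue symbols `chi F = χ_F` on `Fq[T]` determined by the
isomorphism `Ω` from the cube roots of unity of `Fq^*` to `μ₃ ⊂ ℂ^*`. -/
structure IsCubicSymbol (q : ℕ) {Fq : Type} [Field Fq] [Fintype Fq]
    (Ω : Fq → ℂ) (chi : Polynomial Fq → Polynomial Fq → ℂ) : Prop where
  omega_mul : ∀ a b : Fq, a ^ 3 = 1 → b ^ 3 = 1 → Ω (a * b) = Ω a * Ω b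
  omega_cube : ∀ a : Fq, a ^ 3 = 1 → (Ω a) ^ 3 = 1
  omega_inj : ∀ a b : Fq, a ^ 3 = 1 → b ^ 3 = 1 → Ω a = Ω b → a = b
  omega_surj : ∀ z : ℂ, z ^ 3 = 1 → ∃ a : Fq, a ^ 3 = 1 ∧ Ω a = z
  chi_one : ∀ a : Polynomial Fq, chi 1 a = 1
  chi_mul_left : ∀ F G a : Polynomial Fq, F.Monic → G.Monic →
    chi (F * G) a = chi F a * chi G a
  chi_prime_dvd : ∀ P a : Polynomial Fq, P.Monic → Irreducible P → P ∣ a → chi P a = 0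
  chi_prime_not_dvd : ∀ P a : Polynomial Fq, P.Monic → Irreducible P → ¬ P ∣ a →
    ∃ c : Fq, c ^ 3 = 1 ∧ Ω c = chi P a ∧ P ∣ (a ^ ((q ^ P.natDegree - 1) / 3) - C c)

/-- The monic irreducible polynomials over `Fq`. -/
def MonicIrred (Fq : Type) [Field Fq] : Type := {P : Polynomial Fq // P.Monic ∧ Irreducible P}

/-- `|P| = q^{deg P}` as a real number. -/
def normP {Fq : Type} [Field Fq] (q : ℕ) (P : MonicIrred Fq) : ℝ := (q : ℝ) ^ P.1.natDegree

/-- `C_q = ∏_P (1 - 1/(|P|(|P|+1)))`. -/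
def Cq (q : ℕ) (Fq : Type) [Field Fq] : ℝ :=
  ∏' P : MonicIrred Fq, (1 - (normP q P * (normP q P + 1))⁻¹)

/-- `M_q(s) = ζ_q(3s) ∏_P (1 - |P|^{-3s}/(|P|+1))`. -/
def Mq (q : ℕ) (Fq : Type) [Field Fq] (s : ℝ) : ℝ :=
  (1 - (q : ℝ) ^ (1 - 3 * s))⁻¹ *
    ∏' P : MonicIrred Fq, (1 - (normP q P) ^ (-3 * s) * (normP q P + 1)⁻¹)


/-- **Approximate functional equation, odd case.** Here `χ` is a primitive cubic character
of modulus (conductor) `m` over `𝔽_q[T]` which is odd; its genus is `g = deg m - 2 + 1`.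
The hypotheses `hpoly`, `habs`, `hFE` record the facts (from the Weil conjectures) that
`𝓛_C(u,χ) = 𝓛(u,χ)` is a polynomial of degree `g` satisfying the functional equation
`𝓛_C(u,χ) = ω(χ)(√q u)^g 𝓛_C(1/(qu), χ̄)` with `|ω(χ)| = 1`. -/
theorem approximate_functional_equation_odd
    (q : ℕ) (Fq : Type) [Field Fq] [Fintype Fq]
    (hq : IsPrimePow q) (hq6 : q % 6 = 1) (hcard : Fintype.card Fq = q)
    (χ : Polynomial Fq → ℂ) (m : Polynomial Fq) (hm : m.Monic)
    (hmul : ∀ f h : Polynomial Fq, χ (f * h) = χ f * χ h)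
    (hcubic : ∀ f : Polynomial Fq, χ f = 0 ∨ (χ f) ^ 3 = 1)
    (hperiodic : ∀ f h : Polynomial Fq, m ∣ (f - h) → χ f = χ h)
    (hzero : ∀ f : Polynomial Fq, χ f = 0 ↔ ¬ IsCoprime f m)
    (hprimitive : ∀ d : Polynomial Fq, d.Monic → d ∣ m → d ≠ m →
      ¬ (∀ f h : Polynomial Fq, IsCoprime f m → IsCoprime h m → d ∣ (f - h) → χ f = χ h))
    (hodd : ∃ c : Fq, c ≠ 0 ∧ χ (C c) ≠ 1)
    (g : ℕ) (hgenus : m.natDegree = g + 1)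
    (ω : ℂ) (habs : ‖ω‖ = 1)
    (hpoly : ∀ n : ℕ, g < n → sumMonic n χ = 0)
    (hFE : ∀ u : ℂ, u ≠ 0 →
      Lu u χ = ω * (((Real.sqrt q : ℝ) : ℂ) * u) ^ g *
        Lu (1 / ((q : ℂ) * u)) (fun f => (starRingEnd ℂ) (χ f))) :
    ∀ A : ℕ, A ≤ g → ∀ s : ℂ,
      Lu ((q : ℂ) ^ (-s)) χ =
        (∑ n ∈ Finset.range (A + 1), sumMonic n χ * (q : ℂ) ^ (-s * (n : ℂ))) +
          ω * (q : ℂ) ^ ((1 / 2 - s) * (g : ℂ)) *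
            ∑ n ∈ Finset.range (g - A),
              sumMonic n (fun f => (starRingEnd ℂ) (χ f)) *
                (q : ℂ) ^ (-(1 - s) * (n : ℂ)) := by
  intro A hA s
  have hq2 : 2 ≤ q := hq.two_le
  have hqC : (q : ℂ) ≠ 0 := by
    exact_mod_cast Nat.cast_ne_zero.mpr (by omega)
  set a : ℕ → ℂ := fun n => sumMonic n χ with ha_def
  set b : ℕ → ℂ := fun n => sumMonic n (fun f => (starRingEnd ℂ) (χ f)) with hb_def
  have hb : ∀ n, b n = (starRingEnd ℂ) (a n) := by
    intro n; simp [ha_def, hb_def, sumMonic, map_sum]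
  have hbz : ∀ n, g < n → b n = 0 := by
    intro n hn; rw [hb, show a n = 0 from hpoly n hn, map_zero]
  -- Lu as a finite sum
  have hLu : ∀ u : ℂ, Lu u χ = ∑ n ∈ Finset.range (g + 1), a n * u ^ n := by
    intro u
    exact tsum_eq_sum (fun n hn => by
      rw [hpoly n (by simpa using hn), zero_mul])
  have hLub : ∀ u : ℂ, Lu u (fun f => (starRingEnd ℂ) (χ f)) =
      ∑ n ∈ Finset.range (g + 1), b n * u ^ n := by
    intro u
    exact tsum_eq_sum (fun n hn => by
      rw [show sumMonic n (fun f => (starRingEnd ℂ) (χ f)) = b n from rfl,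
        hbz n (by simpa using hn), zero_mul])
  set sq : ℂ := ((Real.sqrt q : ℝ) : ℂ) with hsq_def
  -- coefficient identity from the functional equation
  set P : Polynomial ℂ := ∑ n ∈ Finset.range (g + 1), Polynomial.C (a n) * Polynomial.X ^ n
    with hP_def
  set Q : Polynomial ℂ := ∑ n ∈ Finset.range (g + 1),
      Polynomial.C (ω * sq ^ g * b (g - n) * ((q : ℂ) ^ (g - n))⁻¹) * Polynomial.X ^ n
    with hQ_def
  have heval : ∀ u : ℂ, u ≠ 0 → P.eval u = Q.eval u := by
    intro u hu
    have h1 := hFE u hu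
    rw [hLu, hLub] at h1
    have hPe : P.eval u = ∑ n ∈ Finset.range (g + 1), a n * u ^ n := by
      simp [hP_def, Polynomial.eval_finset_sum]
    have hQe : Q.eval u = ∑ n ∈ Finset.range (g + 1),
        ω * sq ^ g * b (g - n) * ((q : ℂ) ^ (g - n))⁻¹ * u ^ n := by
      simp [hQ_def, Polynomial.eval_finset_sum]
    rw [hPe, hQe, h1, Finset.mul_sum, ← Finset.sum_range_reflect]
    refine Finset.sum_congr rfl ?_
    intro n hn
    have hn' : n ≤ g := by
      have := Finset.mem_range.mp hn; omega
    have hgn : g + 1 - 1 - n = g - n := by omega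
    rw [hgn]
    have hupow : u ^ g = u ^ (g - n) * u ^ n := by
      rw [← pow_add, Nat.sub_add_cancel hn']
    have huz : (u : ℂ) ^ (g - n) ≠ 0 := pow_ne_zero _ hu
    have hqz : ((q : ℂ)) ^ (g - n) ≠ 0 := pow_ne_zero _ hqC
    field_simp [mul_pow, hupow]
    simp only [mul_pow, one_div, mul_inv, inv_pow]
    rw [hupow]
    have e1 := mul_inv_cancel₀ huz
    have e2 := mul_inv_cancel₀ hqz
    linear_combination (ω * sq ^ g * u ^ n * b (g - n)) * ((q : ℂ) ^ (g - n) * ((q : ℂ) ^ (g - n))⁻¹) * e1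
      + (ω * sq ^ g * u ^ n * b (g - n)) * e2
  have hPQ : P = Q := by
    apply Polynomial.eq_of_infinite_eval_eq
    apply Set.Infinite.mono (s := ({0}ᶜ : Set ℂ))
    · exact fun u hu => heval u hu
    · exact Set.Finite.infinite_compl (Set.finite_singleton 0)
  have hcoeff : ∀ k, k ≤ g → a k = ω * sq ^ g * b (g - k) * ((q : ℂ) ^ (g - k))⁻¹ := by
    intro k hk
    have h2 := congrArg (fun p => Polynomial.coeff p k) hPQ
    simp only [hP_def, hQ_def, Polynomial.finset_sum_coeff, Polynomial.coeff_C_mul,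
      Polynomial.coeff_X_pow, mul_ite, mul_one, mul_zero, Finset.sum_ite_eq,
      Finset.sum_ite_eq'] at h2
    rw [if_pos (Finset.mem_range.mpr (by omega)), if_pos (Finset.mem_range.mpr (by omega))] at h2
    exact h2
  -- power identities
  have hpow : ∀ (x : ℂ) (n : ℕ), ((q : ℂ) ^ x) ^ n = (q : ℂ) ^ (x * (n : ℂ)) := by
    intro x n; rw [mul_comm, Complex.cpow_nat_mul]
  have hsq2 : sq = (q : ℂ) ^ ((1 : ℂ)/2) := by
    rw [hsq_def, Real.sqrt_eq_rpow, Complex.ofReal_cpow (by positivity)]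
    push_cast
    norm_num
  have hnat : ∀ n : ℕ, ((q : ℂ) ^ n)⁻¹ = (q : ℂ) ^ (-(n : ℂ)) := by
    intro n; rw [← Complex.cpow_natCast, ← Complex.cpow_neg]
  have hadd : ∀ x y : ℂ, (q : ℂ) ^ x * (q : ℂ) ^ y = (q : ℂ) ^ (x + y) :=
    fun x y => (Complex.cpow_add x y hqC).symm
  -- main computation
  rw [hLu]
  rw [show Finset.range (g + 1) = Finset.Ico 0 (g + 1) from Finset.range_eq_Ico (g + 1)]
  rw [← Finset.sum_Ico_consecutive _ (Nat.zero_le (A + 1)) (by omega : A + 1 ≤ g + 1)]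
  rw [← Finset.range_eq_Ico]
  congr 1
  · refine Finset.sum_congr rfl ?_
    intro n _
    rw [hpow]
  · rw [Finset.mul_sum]
    refine Finset.sum_nbij' (fun n => g - n) (fun m => g - m) ?_ ?_ ?_ ?_ ?_
    · intro n hn
      simp only [Finset.mem_Ico, Finset.mem_range] at *
      omega
    · intro m hm
      simp only [Finset.mem_Ico, Finset.mem_range] at *
      omega
    · intro n hn
      simp only [Finset.mem_Ico] at hn
      show g - (g - n) = n
      omega
    · intro m hm
      simp only [Finset.mem_range] at hm
      show g - (g - m) = m
      omega
    · intro n hn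
      simp only [Finset.mem_Ico] at hn
      have hn' : n ≤ g := by omega
      have hgg : g - (g - n) = n := by omega
      rw [hcoeff n hn']
      rw [show (sumMonic (g - n) fun f => (starRingEnd ℂ) (χ f)) = b (g - n) from rfl]
      rw [hsq2, hpow, hnat, hpow]
      have hc1 : ((g - n : ℕ) : ℂ) = (g : ℂ) - (n : ℂ) := by
        push_cast [Nat.cast_sub hn']; ring
      rw [hc1]
      rw [show ω * (q : ℂ) ^ (1 / 2 * (g : ℂ)) * b (g - n) * (q : ℂ) ^ (-((g : ℂ) - (n : ℂ)))
            * (q : ℂ) ^ (-s * (n : ℂ))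
          = ω * b (g - n) * ((q : ℂ) ^ (1 / 2 * (g : ℂ)) * (q : ℂ) ^ (-((g : ℂ) - (n : ℂ)))
            * (q : ℂ) ^ (-s * (n : ℂ))) from by ring]
      rw [show ω * (q : ℂ) ^ ((1 / 2 - s) * (g : ℂ))
            * (b (g - n) * (q : ℂ) ^ (-(1 - s) * ((g : ℂ) - (n : ℂ))))
          = ω * b (g - n) * ((q : ℂ) ^ ((1 / 2 - s) * (g : ℂ))
            * (q : ℂ) ^ (-(1 - s) * ((g : ℂ) - (n : ℂ)))) from by ring]
      rw [hadd, hadd, hadd]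
      congr 2
      ring
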